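/- Let D > 0, t > 0, v ∈ ℝ, and let z_a^TX < z_b^TX and z_a^RX < z_b^RX be real numbers with l_TX = z_b^TX − z_a^TX. Define a₀ = z_b^RX − z_a^TX − v·t, a₁ = z_b^RX − z_b^TX − v·t, a₂ = z_a^RX − z_b^TX − v·t, a₃ = z_a^RX − z_a^TX − v·t. Then (1/l_TX)·∫_{z_a^TX}^{z_b^TX} ∫_{z_a^RX}^{z_b^RX} (1/√(4πDt))·exp(−(z_r − z_m − v·t)²/(4Dt)) dz_r dz_m = (1/(2·l_TX))·Σ_{i=0}^{3} (−1)^i·[a_i·erf(a_i/√(4Dt)) + √(4Dt/π)·exp(−a_i²/(4Dt))]. (This is Proposition 3: the channel impulse response h₀(t) for a molecule uniformly distributed in the TX region at time 0.) -/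

import Mathlib

/-- The Gaussian error function `erf(x) = (2/√π)·∫₀ˣ exp(−u²) du`. -/
noncomputable def erf (x : ℝ) : ℝ :=
  (2 / Real.sqrt Real.pi) * ∫ u in (0:ℝ)..x, Real.exp (-u ^ 2)

lemma erf_hasDerivAt (x : ℝ) :
    HasDerivAt erf (2 / Real.sqrt Real.pi * Real.exp (-x ^ 2)) x := by
  have hc : Continuous fun u : ℝ => Real.exp (-u ^ 2) := by continuity
  have h1 : HasDerivAt (fun y : ℝ => ∫ u in (0:ℝ)..y, Real.exp (-u ^ 2))
      (Real.exp (-x ^ 2)) x :=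
    intervalIntegral.integral_hasDerivAt_right (hc.intervalIntegrable 0 x)
      (hc.stronglyMeasurableAtFilter _ _) hc.continuousAt
  exact h1.const_mul (2 / Real.sqrt Real.pi)

lemma erf_continuous : Continuous erf :=
  continuous_iff_continuousAt.2 fun x => (erf_hasDerivAt x).continuousAt

/-- Antiderivative of erf. -/
noncomputable def Phi (x : ℝ) : ℝ :=
  x * erf x + (1 / Real.sqrt Real.pi) * Real.exp (-x ^ 2)

lemma phi_hasDerivAt (x : ℝ) : HasDerivAt Phi (erf x) x := by
  have hpi : Real.sqrt Real.pi ≠ 0 :=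
    ne_of_gt (Real.sqrt_pos.2 Real.pi_pos)
  have h1 : HasDerivAt (fun y : ℝ => y * erf y)
      (1 * erf x + x * (2 / Real.sqrt Real.pi * Real.exp (-x ^ 2))) x :=
    (hasDerivAt_id x).mul (erf_hasDerivAt x)
  have h2 : HasDerivAt (fun y : ℝ => Real.exp (-y ^ 2))
      (Real.exp (-x ^ 2) * -(2 * x ^ 1)) x := by
    exact (((hasDerivAt_pow 2 x).neg).exp)
  have h3 := h1.add (h2.const_mul (1 / Real.sqrt Real.pi))
  have : HasDerivAt Phi
      (1 * erf x + x * (2 / Real.sqrt Real.pi * Real.exp (-x ^ 2)) +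
        1 / Real.sqrt Real.pi * (Real.exp (-x ^ 2) * -(2 * x ^ 1))) x := h3
  convert this using 1
  field_simp
  ring

/-- The inner Gaussian integral evaluated by erf. -/
lemma inner_eval (s μ : ℝ) (hs : 0 < s) (p q : ℝ) :
    ∫ zr in p..q, (1 / (Real.sqrt Real.pi * s)) * Real.exp (-((zr - μ) / s) ^ 2)
      = (1 / 2) * erf ((q - μ) / s) - (1 / 2) * erf ((p - μ) / s) := by
  have hs' : s ≠ 0 := ne_of_gt hs
  have hpi : Real.sqrt Real.pi ≠ 0 := ne_of_gt (Real.sqrt_pos.2 Real.pi_pos)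
  apply intervalIntegral.integral_eq_sub_of_hasDerivAt
  · intro x _
    have hg : HasDerivAt (fun zr : ℝ => (zr - μ) / s) (1 / s) x := by
      simpa using ((hasDerivAt_id x).sub_const μ).div_const s
    have h := ((erf_hasDerivAt ((x - μ) / s)).comp x hg).const_mul (1 / 2)
    refine h.congr_deriv ?_
    ring
  · apply Continuous.intervalIntegrable
    continuity

/-- The outer erf integral evaluated by Phi. -/
lemma outer_eval (s c : ℝ) (hs : 0 < s) (A B : ℝ) :
    ∫ zm in A..B, erf ((c - zm) / s)
      = (-s) * Phi ((c - B) / s) - (-s) * Phi ((c - A) / s) := by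
  have hs' : s ≠ 0 := ne_of_gt hs
  apply intervalIntegral.integral_eq_sub_of_hasDerivAt
  · intro x _
    have hg : HasDerivAt (fun zm : ℝ => (c - zm) / s) (-1 / s) x := by
      simpa using ((hasDerivAt_const x c).sub (hasDerivAt_id x)).div_const s
    have h := ((phi_hasDerivAt ((c - x) / s)).comp x hg).const_mul (-s)
    refine h.congr_deriv ?_
    have hh : -s * (-1 / s) = 1 := by field_simp
    linear_combination (erf ((c - x) / s)) * hh
  · exact (erf_continuous.comp (by continuity)).intervalIntegrable _ _

set_option maxHeartbeats 1000000 in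
theorem stmt_5 (D t v zaTX zbTX zaRX zbRX : ℝ) (hD : 0 < D) (ht : 0 < t)
    (hTX : zaTX < zbTX) (hRX : zaRX < zbRX)
    (lTX : ℝ) (hlTX : lTX = zbTX - zaTX)
    (a : Fin 4 → ℝ)
    (ha : a = ![zbRX - zaTX - v * t, zbRX - zbTX - v * t,
                zaRX - zbTX - v * t, zaRX - zaTX - v * t]) :
    (1 / lTX) * ∫ zm in zaTX..zbTX, ∫ zr in zaRX..zbRX,
        (1 / Real.sqrt (4 * Real.pi * D * t)) *
          Real.exp (-(zr - zm - v * t) ^ 2 / (4 * D * t)) =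
      (1 / (2 * lTX)) * ∑ i : Fin 4, (-1 : ℝ) ^ (i : ℕ) *
        (a i * erf (a i / Real.sqrt (4 * D * t)) +
          Real.sqrt (4 * D * t / Real.pi) * Real.exp (-(a i) ^ 2 / (4 * D * t))) := by
  set s : ℝ := Real.sqrt (4 * D * t) with hsdef
  have h4Dt : (0:ℝ) < 4 * D * t := by positivity
  have hs : 0 < s := Real.sqrt_pos.2 h4Dt
  have hs' : s ≠ 0 := ne_of_gt hs
  have hs2 : s ^ 2 = 4 * D * t := Real.sq_sqrt h4Dt.le
  have hpi : (0:ℝ) < Real.sqrt Real.pi := Real.sqrt_pos.2 Real.pi_pos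
  have hsqrt : Real.sqrt (4 * Real.pi * D * t) = Real.sqrt Real.pi * s := by
    rw [hsdef, ← Real.sqrt_mul Real.pi_pos.le]
    ring_nf
  -- rewrite the inner integrand and evaluate the inner integral
  have hinner : ∀ zm : ℝ,
      (∫ zr in zaRX..zbRX, (1 / Real.sqrt (4 * Real.pi * D * t)) *
          Real.exp (-(zr - zm - v * t) ^ 2 / (4 * D * t)))
        = (1 / 2) * erf ((zbRX - (zm + v * t)) / s)
          - (1 / 2) * erf ((zaRX - (zm + v * t)) / s) := by
    intro zm
    rw [← inner_eval s (zm + v * t) hs zaRX zbRX]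
    apply intervalIntegral.integral_congr
    intro zr _
    have harg : -(zr - zm - v * t) ^ 2 / (4 * D * t)
        = -((zr - (zm + v * t)) / s) ^ 2 := by
      rw [div_pow, hs2]
      ring
    rw [hsqrt]
    simp only [harg]
  have houter : (∫ zm in zaTX..zbTX, ∫ zr in zaRX..zbRX,
        (1 / Real.sqrt (4 * Real.pi * D * t)) *
          Real.exp (-(zr - zm - v * t) ^ 2 / (4 * D * t)))
      = ∫ zm in zaTX..zbTX,
          ((1 / 2) * erf ((zbRX - (zm + v * t)) / s)
            - (1 / 2) * erf ((zaRX - (zm + v * t)) / s)) :=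
    intervalIntegral.integral_congr (fun zm _ => hinner zm)
  rw [houter]
  have hcont : Continuous fun zm : ℝ => erf (((zbRX - v * t) - zm) / s) :=
    erf_continuous.comp (by continuity)
  have hcont' : Continuous fun zm : ℝ => erf (((zaRX - v * t) - zm) / s) :=
    erf_continuous.comp (by continuity)
  have hsplit : ∫ zm in zaTX..zbTX,
      ((1 / 2) * erf ((zbRX - (zm + v * t)) / s)
        - (1 / 2) * erf ((zaRX - (zm + v * t)) / s))
      = (1/2) * (∫ zm in zaTX..zbTX, erf (((zbRX - v * t) - zm) / s))
        - (1/2) * (∫ zm in zaTX..zbTX, erf (((zaRX - v * t) - zm) / s)) := by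
    rw [← intervalIntegral.integral_const_mul, ← intervalIntegral.integral_const_mul,
      ← intervalIntegral.integral_sub
        ((hcont.intervalIntegrable _ _).const_mul _)
        ((hcont'.intervalIntegrable _ _).const_mul _)]
    apply intervalIntegral.integral_congr
    intro zm _
    ring_nf
  rw [hsplit, outer_eval s (zbRX - v * t) hs zaTX zbTX,
    outer_eval s (zaRX - v * t) hs zaTX zbTX]
  -- now the RHS
  have hsqrtdiv : Real.sqrt (4 * D * t / Real.pi) = s / Real.sqrt Real.pi := by
    rw [hsdef, Real.sqrt_div h4Dt.le]
  have key : ∀ x : ℝ, x * erf (x / s) +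
      Real.sqrt (4 * D * t / Real.pi) * Real.exp (-x ^ 2 / (4 * D * t))
        = s * Phi (x / s) := by
    intro x
    rw [hsqrtdiv]
    unfold Phi
    rw [div_pow, hs2]
    field_simp
  have e1 : zbRX - v * t - zbTX = zbRX - zbTX - v * t := by ring
  have e2 : zbRX - v * t - zaTX = zbRX - zaTX - v * t := by ring
  have e3 : zaRX - v * t - zbTX = zaRX - zbTX - v * t := by ring
  have e4 : zaRX - v * t - zaTX = zaRX - zaTX - v * t := by ring
  rw [e1, e2, e3, e4, ha]
  rw [Fin.sum_univ_four]
  simp only [Matrix.cons_val_zero, Matrix.cons_val_one, Matrix.head_cons,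
    Matrix.cons_val_two, Matrix.tail_cons, Matrix.cons_val_three, Fin.isValue]
  rw [key (zbRX - zaTX - v * t), key (zbRX - zbTX - v * t),
    key (zaRX - zbTX - v * t), key (zaRX - zaTX - v * t)]
  have hl : lTX ≠ 0 := by rw [hlTX]; linarith
  have h3 : ((3 : Fin 4) : ℕ) = 3 := rfl
  have h2' : ((2 : Fin 4) : ℕ) = 2 := rfl
  have h1' : ((1 : Fin 4) : ℕ) = 1 := rfl
  have h0' : ((0 : Fin 4) : ℕ) = 0 := rfl
  rw [h3, h2', h1', h0']
  norm_num
  field_simp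
  ring
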